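/- Let A be a unital complex Banach algebra and a, b ∈ A with a quasinilpotent (spectral radius zero). If there exists c ∈ A with a*b = c*a and b*a = a*c, then a*b is quasinilpotent. -/

import Mathlib

open Filter ENNReal Topology
open scoped NNReal

lemma rzero_iff {A : Type*} [NormedRing A] [NormedAlgebra ℂ A] (x : A) :
    spectralRadius ℂ x = 0 ↔ ∀ z ∈ spectrum ℂ x, z = 0 := by
  rw [spectralRadius]
  simp [ENNReal.iSup_eq_zero]

theorem stmt_15 {A : Type*} [NormedRing A] [NormedAlgebra ℂ A] [CompleteSpace A]
    (a b : A) (ha : spectralRadius ℂ a = 0)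
    (h : ∃ c : A, a * b = c * a ∧ b * a = a * c) :
    spectralRadius ℂ (a * b) = 0 := by
  rcases subsingleton_or_nontrivial A with hA | hA
  · exact spectrum.SpectralRadius.of_subsingleton _
  obtain ⟨c, h1, h2⟩ := h
  -- key recursion
  have key : ∀ n : ℕ, (a * b) ^ (n + 2) = a ^ 2 * ((a * b) ^ n * (c * b)) := by
    intro n
    induction n with
    | zero =>
      have : (a * b) * (a * b) = a * ((b * a) * b) := by noncomm_ring
      rw [pow_two, this, h2]
      noncomm_ring
    | succ n ih =>
      have e1 : (a * b) ^ (n + 3) = (a * b) ^ (n + 2) * (a * b) := pow_succ _ _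
      have e2 : (c * b) * (a * b) = c * ((b * a) * b) := by noncomm_ring
      have e3 : c * ((a * c) * b) = (c * a) * (c * b) := by noncomm_ring
      rw [e1, ih, mul_assoc, mul_assoc, e2, h2, e3, ← h1]
      noncomm_ring
  have key2 : ∀ m : ℕ, ((a * b) ^ 2) ^ m = (a ^ 2) ^ m * (c * b) ^ m := by
    intro m
    induction m with
    | zero => simp
    | succ m ih =>
      have e0 : ((a * b) ^ 2) ^ (m + 1) = (a * b) ^ (2 * m + 2) := by
        rw [← pow_mul]; ring_nf
      have e1 : (a * b) ^ (2 * m) = ((a * b) ^ 2) ^ m := by rw [← pow_mul]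
      rw [e0, key (2 * m), e1, ih, pow_succ' (a ^ 2), pow_succ (c * b)]
      noncomm_ring
  -- spectral radius of a^2 is 0
  have ha2 : spectralRadius ℂ (a ^ 2) = 0 := by
    rw [rzero_iff] at ha ⊢
    intro z hz
    rw [spectrum.map_pow] at hz
    obtain ⟨w, hw, rfl⟩ := hz
    rw [ha w hw]; ring
  -- spectral radius of (a*b)^2 is 0
  have hx : spectralRadius ℂ ((a * b) ^ 2) = 0 := by
    set x := (a * b) ^ 2
    have hub : ∀ᶠ m : ℕ in atTop,
        (‖x ^ m‖₊ : ℝ≥0∞) ^ (1 / m : ℝ) ≤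
          (‖(a ^ 2) ^ m‖₊ : ℝ≥0∞) ^ (1 / m : ℝ) * (‖c * b‖₊ : ℝ≥0∞) := by
      filter_upwards [eventually_ge_atTop 1] with m hm
      have hb : ‖x ^ m‖₊ ≤ ‖(a ^ 2) ^ m‖₊ * ‖c * b‖₊ ^ m := by
        rw [key2 m]
        calc ‖(a ^ 2) ^ m * (c * b) ^ m‖₊ ≤ ‖(a ^ 2) ^ m‖₊ * ‖(c * b) ^ m‖₊ := nnnorm_mul_le _ _
          _ ≤ ‖(a ^ 2) ^ m‖₊ * ‖c * b‖₊ ^ m := by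
              gcongr
              exact nnnorm_pow_le' _ hm
      calc (‖x ^ m‖₊ : ℝ≥0∞) ^ (1 / m : ℝ)
          ≤ ((‖(a ^ 2) ^ m‖₊ * ‖c * b‖₊ ^ m : ℝ≥0) : ℝ≥0∞) ^ (1 / m : ℝ) :=
            ENNReal.rpow_le_rpow (by exact_mod_cast hb) (by positivity)
        _ = (‖(a ^ 2) ^ m‖₊ : ℝ≥0∞) ^ (1 / m : ℝ) *
              ((‖c * b‖₊ : ℝ≥0∞) ^ (m : ℕ)) ^ (1 / m : ℝ) := by
            push_cast
            rw [ENNReal.mul_rpow_of_nonneg _ _ (by positivity)]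
        _ = (‖(a ^ 2) ^ m‖₊ : ℝ≥0∞) ^ (1 / m : ℝ) * (‖c * b‖₊ : ℝ≥0∞) := by
            rw [← ENNReal.rpow_natCast, ← ENNReal.rpow_mul,
              mul_one_div, div_self (by exact_mod_cast Nat.one_le_iff_ne_zero.mp hm),
              ENNReal.rpow_one]
    have htend : Tendsto (fun m : ℕ => (‖(a ^ 2) ^ m‖₊ : ℝ≥0∞) ^ (1 / m : ℝ) *
        (‖c * b‖₊ : ℝ≥0∞)) atTop (𝓝 0) := by
      have := ENNReal.Tendsto.mul_const
        (spectrum.pow_nnnorm_pow_one_div_tendsto_nhds_spectralRadius (a ^ 2))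
        (b := (‖c * b‖₊ : ℝ≥0∞)) (Or.inr coe_ne_top)
      rwa [ha2, zero_mul] at this
    have h0 : Tendsto (fun m : ℕ => (‖x ^ m‖₊ : ℝ≥0∞) ^ (1 / m : ℝ)) atTop (𝓝 0) :=
      tendsto_of_tendsto_of_tendsto_of_le_of_le' tendsto_const_nhds htend
        (Eventually.of_forall fun _ => zero_le) hub
    refine le_antisymm ?_ zero_le
    calc spectralRadius ℂ x ≤ atTop.liminf fun m : ℕ => (‖x ^ m‖₊ : ℝ≥0∞) ^ (1 / m : ℝ) :=
          spectrum.spectralRadius_le_liminf_pow_nnnorm_pow_one_div ℂ x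
      _ = 0 := h0.liminf_eq
  -- conclude
  rw [rzero_iff] at hx ⊢
  intro z hz
  have : z ^ 2 ∈ spectrum ℂ ((a * b) ^ 2) :=
    spectrum.pow_image_subset (a * b) 2 ⟨z, hz, rfl⟩
  exact (pow_eq_zero_iff two_ne_zero).mp (hx _ this)
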